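/- arXiv:0804.4896 — 2 statements merged into one kernel-verified Lean document; each statement's English description precedes it below -/
import Mathlib

section
/- If condition (*) is violated — i.e., there exist N ∈ ℕ, ω, and a maximal configuration κ† with E_ω(κ†, N) < E_ω(κ̄(N,ω), N) — and ℕ is upward closed (N ∈ ℕ and N' ≥ N implies N' ∈ ℕ), then ℕ is not monotonic: there exists N' ≥ N in ℕ with E_ω(N') < E_ω(N). -/
open scoped ENNReal Classical

/-- A Petri net: sets of places and transitions with flow given by pre/post sets,
    and initial marking `M0`. -/
structure PetriNet where
  P : Type
  T : Type
  pre : T → Set P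
  post : T → Set P
  M0 : Set P

namespace PetriNet

variable (N : PetriNet)

/-- Nodes of a net: places or transitions. -/
abbrev Node := N.P ⊕ N.T

/-- One-step flow relation. -/
def prec : N.Node → N.Node → Prop
  | Sum.inl p, Sum.inr t => p ∈ N.pre t
  | Sum.inr t, Sum.inl p => p ∈ N.post t
  | _, _ => False

/-- Causality (reflexive): reflexive-transitive closure of the flow relation. -/
def causLe : N.Node → N.Node → Prop := Relation.ReflTransGen N.prec

/-- Strict causality. -/
def causLt : N.Node → N.Node → Prop := Relation.TransGen N.prec

/-- Conflict: `x # y` iff distinct transitions below `x` and `y` share a preset place. -/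
def Conflict (x y : N.Node) : Prop :=
  ∃ t t' : N.T, t ≠ t' ∧ N.causLe (Sum.inr t) x ∧ N.causLe (Sum.inr t') y ∧
    (N.pre t ∩ N.pre t').Nonempty

/-- Concurrency. -/
def Concurrent (x y : N.Node) : Prop :=
  ¬ N.causLe x y ∧ ¬ N.causLe y x ∧ ¬ N.Conflict x y

/-- A configuration: causally closed and conflict-free set of nodes. -/
def IsConfiguration (κ : Set N.Node) : Prop :=
  (∀ x y : N.Node, N.causLe x y → y ∈ κ → x ∈ κ) ∧
  (∀ x ∈ κ, ∀ y ∈ κ, ¬ N.Conflict x y)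

/-- Maximal configuration. -/
def IsMaxConfiguration (κ : Set N.Node) : Prop :=
  N.IsConfiguration κ ∧ ∀ κ', N.IsConfiguration κ' → κ ⊆ κ' → κ' = κ

/-- A minimal place: no transition produces it. -/
def Minimal (p : N.P) : Prop := ∀ t : N.T, p ∉ N.post t

/-- Occurrence net: no self-conflict, causality a partial order with finite pasts,
    each place produced by at most one transition, `M0` the minimal places. -/
def IsOccurrenceNet : Prop :=
  (∀ x : N.Node, ¬ N.Conflict x x) ∧
  (∀ x y : N.Node, N.causLe x y → N.causLe y x → x = y) ∧
  (∀ t : N.T, {x : N.Node | N.causLe x (Sum.inr t)}.Finite) ∧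
  (∀ p : N.P, {t : N.T | p ∈ N.post t}.Subsingleton) ∧
  (N.M0 = {p : N.P | N.Minimal p})

/-! ### Timed semantics (dates, race policy) -/

/-- One step of the dating operator: a place gets the date of its producing transition
    (or its initial date if minimal), a transition is dated `max` of its preset dates
    plus its latency. -/
noncomputable def dateF (τ : N.T → ℝ≥0∞) (init : N.P → ℝ≥0∞)
    (f : N.Node → ℝ≥0∞) : N.Node → ℝ≥0∞
  | Sum.inl p => if N.Minimal p then init p else ⨆ t ∈ {t : N.T | p ∈ N.post t}, f (Sum.inr t)
  | Sum.inr t => (⨆ p ∈ N.pre t, f (Sum.inl p)) + τ t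

/-- The date of each node (least fixed point of `dateF`; on finite acyclic nets this is
    the usual recursive definition of dates). -/
noncomputable def date (τ : N.T → ℝ≥0∞) (init : N.P → ℝ≥0∞) : N.Node → ℝ≥0∞ :=
  ⨆ k, (N.dateF τ init)^[k] ⊥

/-- Execution time (latency) of a set of nodes: max of the dates of its nodes. -/
noncomputable def execTime (τ : N.T → ℝ≥0∞) (init : N.P → ℝ≥0∞) (κ : Set N.Node) : ℝ≥0∞ :=
  ⨆ x ∈ κ, N.date τ init x

/-- Transition `t` can extend configuration `κ`: it is enabled (preset in `κ`),
    not yet fired, and firing it keeps a configuration (no conflict with `κ`). -/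
def Extends (κ : Set N.Node) (t : N.T) : Prop :=
  Sum.inr t ∉ κ ∧ (∀ p ∈ N.pre t, Sum.inl p ∈ κ) ∧
  N.IsConfiguration (κ ∪ {Sum.inr t} ∪ Sum.inl '' N.post t)

/-- One step of the race policy: among the enabled transitions, one with minimal
    date fires (preempting its conflicting rivals). -/
def RaceStep (τ : N.T → ℝ≥0∞) (init : N.P → ℝ≥0∞) (κ κ' : Set N.Node) : Prop :=
  ∃ t : N.T, N.Extends κ t ∧
    (∀ t' : N.T, N.Extends κ t' → N.date τ init (Sum.inr t) ≤ N.date τ init (Sum.inr t')) ∧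
    κ' = κ ∪ {Sum.inr t} ∪ Sum.inl '' N.post t

/-- The initial configuration: the minimal places. -/
def initConf : Set N.Node := Sum.inl '' {p : N.P | N.Minimal p}

/-- `κ` is an actually occurring configuration under the race policy. -/
def Occurs (τ : N.T → ℝ≥0∞) (init : N.P → ℝ≥0∞) (κ : Set N.Node) : Prop :=
  Relation.ReflTransGen (N.RaceStep τ init) N.initConf κ ∧ ∀ t : N.T, ¬ N.Extends κ t

/-! ### Clusters -/

/-- Closure conditions for clusters: `t ∈ c → •t ⊆ c` and `p ∈ c → p• ⊆ c`. -/
def ClusterClosed (c : Set N.Node) : Prop :=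
  (∀ t : N.T, Sum.inr t ∈ c → ∀ p ∈ N.pre t, Sum.inl p ∈ c) ∧
  (∀ p : N.P, Sum.inl p ∈ c → ∀ t : N.T, p ∈ N.pre t → Sum.inr t ∈ c)

/-- A cluster: a minimal nonempty set of nodes satisfying the closure conditions. -/
def IsCluster (c : Set N.Node) : Prop :=
  c.Nonempty ∧ N.ClusterClosed c ∧
  ∀ c' : Set N.Node, c'.Nonempty → N.ClusterClosed c' → c' ⊆ c → c' = c

/-! ### Marking semantics, workflow nets -/

/-- Firing a transition in the (1-safe, set-based) marking semantics. -/
def Fires (M : Set N.P) (t : N.T) (M' : Set N.P) : Prop :=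
  N.pre t ⊆ M ∧ M' = (M \ N.pre t) ∪ N.post t

/-- Reachability between markings. -/
def Reach : Set N.P → Set N.P → Prop :=
  Relation.ReflTransGen (fun M M' => ∃ t : N.T, N.Fires M t M')

end PetriNet

open PetriNet

/-- Workflow net with source place `i` and sink place `o`. -/
def IsWorkflow (N : PetriNet) (i o : N.P) : Prop :=
  (∀ p : N.P, (∀ t : N.T, p ∉ N.post t) ↔ p = i) ∧
  (∀ p : N.P, (∀ t : N.T, p ∉ N.pre t) ↔ p = o) ∧
  N.M0 = {i}

/-- Soundness of a workflow net. -/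
def IsSound (N : PetriNet) (i o : N.P) : Prop :=
  (∀ M, N.Reach {i} M → N.Reach M {o}) ∧
  (∀ M, N.Reach {i} M → o ∈ M → M = {o}) ∧
  (∀ t : N.T, ∃ M, N.Reach {i} M ∧ N.pre t ⊆ M)

/-- 1-safety in the set-based semantics: a fired transition never re-marks a
    still-marked place. -/
def IsSafe (N : PetriNet) (i : N.P) : Prop :=
  ∀ M t M', N.Reach {i} M → N.Fires M t M' → (M \ N.pre t) ∩ N.post t = ∅

/-- Loop-freeness: the flow relation is acyclic. -/
def LoopFree (N : PetriNet) : Prop := ∀ x : N.Node, ¬ N.causLt x x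

/-- Net morphism: maps places to places and transitions to transitions, restricting
    to bijections on presets and postsets of transitions. -/
structure NetMorphism (U W : PetriNet) where
  fP : U.P → W.P
  fT : U.T → W.T
  pre_bij : ∀ t : U.T, Set.BijOn fP (U.pre t) (W.pre (fT t))
  post_bij : ∀ t : U.T, Set.BijOn fP (U.post t) (W.post (fT t))

/-- The induced map on nodes. -/
def NetMorphism.node {U W : PetriNet} (φ : NetMorphism U W) : U.Node → W.Node :=
  Sum.map φ.fP φ.fT

/-- `(U, φ)` is (a) branching-process unfolding of `W`: `U` is an occurrence net,
    `φ` a morphism mapping the minimal places of `U` bijectively onto those of `W`,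
    and every co-set of `U` matching the preset of a transition of `W` is the preset
    of exactly one transition of `U` above it. -/
def IsUnfolding (U W : PetriNet) (φ : NetMorphism U W) : Prop :=
  U.IsOccurrenceNet ∧
  Set.BijOn φ.fP {p : U.P | U.Minimal p} {p : W.P | ∀ t : W.T, p ∉ W.post t} ∧
  (∀ (X : Set U.P) (u : W.T),
    (∀ p ∈ X, ∀ q ∈ X, p = q ∨ U.Concurrent (Sum.inl p) (Sum.inl q)) →
    Set.BijOn φ.fP X (W.pre u) →
    ∃! t : U.T, U.pre t = X ∧ φ.fT t = u)

section AuxStmt8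

namespace PetriNet

variable {N : PetriNet}

lemma prec_irrefl' (x : N.Node) : ¬ N.prec x x := by
  cases x <;> simp [PetriNet.prec]

lemma causLt_irrefl' (hN : N.IsOccurrenceNet) (x : N.Node) : ¬ N.causLt x x := by
  intro h
  rw [PetriNet.causLt, Relation.TransGen.head'_iff] at h
  obtain ⟨y, hxy, hyx⟩ := h
  have hxy' : N.causLe x y := Relation.ReflTransGen.single hxy
  have := hN.2.1 x y hxy' hyx
  subst this
  exact prec_irrefl' x hxy

/-- decomposition of causality below a transition -/
lemma causLe_inr (x : N.Node) (t : N.T) (h : N.causLe x (Sum.inr t)) :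
    x = Sum.inr t ∨ ∃ p ∈ N.pre t, N.causLe x (Sum.inl p) := by
  rcases h.cases_tail with h | ⟨c, hc, hstep⟩
  · exact Or.inl h.symm
  · cases c with
    | inl p => exact Or.inr ⟨p, hstep, hc⟩
    | inr t' => exact absurd hstep (by simp [PetriNet.prec])

/-- decomposition of causality below a place -/
lemma causLe_inl (x : N.Node) (p : N.P) (h : N.causLe x (Sum.inl p)) :
    x = Sum.inl p ∨ ∃ t : N.T, p ∈ N.post t ∧ N.causLe x (Sum.inr t) := by
  rcases h.cases_tail with h | ⟨c, hc, hstep⟩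
  · exact Or.inl h.symm
  · cases c with
    | inl p' => exact absurd hstep (by simp [PetriNet.prec])
    | inr t' => exact Or.inr ⟨t', hstep, hc⟩

lemma causLe_inl_min {p : N.P} (hp : N.Minimal p) (x : N.Node)
    (h : N.causLe x (Sum.inl p)) : x = Sum.inl p := by
  rcases causLe_inl x p h with h | ⟨t, ht, _⟩
  · exact h
  · exact absurd ht (hp t)

lemma causLe_inl_post (hN : N.IsOccurrenceNet) {q : N.P} {t : N.T} (hq : q ∈ N.post t)
    (x : N.Node) (h : N.causLe x (Sum.inl q)) :
    x = Sum.inl q ∨ N.causLe x (Sum.inr t) := by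
  rcases causLe_inl x q h with h | ⟨t', ht', hle⟩
  · exact Or.inl h
  · have : t' = t := hN.2.2.2.1 q ht' hq
    exact Or.inr (this ▸ hle)

/-- no conflict can involve a node over a minimal place -/
lemma no_conflict_min {p : N.P} (hp : N.Minimal p) (x : N.Node) :
    ¬ N.Conflict x (Sum.inl p) ∧ ¬ N.Conflict (Sum.inl p) x := by
  constructor
  · rintro ⟨t, t', _, _, h2, _⟩
    exact absurd (causLe_inl_min hp _ h2) (by simp)
  · rintro ⟨t, t', _, h1, _, _⟩
    exact absurd (causLe_inl_min hp _ h1) (by simp)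

/-- all minimal places belong to any maximal configuration -/
lemma initConf_subset_max (hN : N.IsOccurrenceNet) {κ : Set N.Node}
    (hκ : N.IsMaxConfiguration κ) : N.initConf ⊆ κ := by
  have hconf : N.IsConfiguration (κ ∪ N.initConf) := by
    constructor
    · rintro x y hxy (hy | hy)
      · exact Or.inl (hκ.1.1 x y hxy hy)
      · obtain ⟨p, hp, rfl⟩ := hy
        have := causLe_inl_min hp x hxy
        exact Or.inr (this ▸ ⟨p, hp, rfl⟩)
    · rintro x (hx | ⟨p, hp, rfl⟩) y (hy | ⟨q, hq, rfl⟩)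
      · exact hκ.1.2 x hx y hy
      · exact (no_conflict_min hq x).1
      · exact (no_conflict_min hp y).2
      · exact (no_conflict_min hq _).1
  have := hκ.2 _ hconf (Set.subset_union_left)
  rw [← this]
  exact Set.subset_union_right

/-- maximal configurations are saturated: they contain the postsets of their
transitions -/
lemma max_saturated (hN : N.IsOccurrenceNet) {κ : Set N.Node}
    (hκ : N.IsMaxConfiguration κ) {t : N.T} (ht : Sum.inr t ∈ κ)
    {q : N.P} (hq : q ∈ N.post t) : Sum.inl q ∈ κ := by
  have hconf : N.IsConfiguration (κ ∪ {Sum.inl q}) := by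
    constructor
    · rintro x y hxy (hy | hy)
      · exact Or.inl (hκ.1.1 x y hxy hy)
      · simp only [Set.mem_singleton_iff] at hy; subst hy
        rcases causLe_inl_post hN hq x hxy with rfl | hle
        · exact Or.inr rfl
        · exact Or.inl (hκ.1.1 x _ hle ht)
    · have key : ∀ z ∈ κ ∪ {Sum.inl q}, ∃ z' ∈ κ, ∀ s : N.T,
          N.causLe (Sum.inr s) z → N.causLe (Sum.inr s) z' := by
        rintro z (hz | hz)
        · exact ⟨z, hz, fun _ h => h⟩
        · simp only [Set.mem_singleton_iff] at hz; subst hz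
          refine ⟨Sum.inr t, ht, fun s hs => ?_⟩
          rcases causLe_inl_post hN hq _ hs with h | h
          · exact absurd h (by simp)
          · exact h
      rintro x hx y hy ⟨t1, t2, hne, h1, h2, hov⟩
      obtain ⟨x', hx', hfx⟩ := key x hx
      obtain ⟨y', hy', hfy⟩ := key y hy
      exact hκ.1.2 x' hx' y' hy' ⟨t1, t2, hne, hfx t1 h1, hfy t2 h2, hov⟩
  have := hκ.2 _ hconf (Set.subset_union_left)
  rw [← this]
  exact Or.inr rfl

/-- dates only depend on latencies of causally relevant transitions -/
lemma date_congr (τ τ' : N.T → ℝ≥0∞) (init : N.P → ℝ≥0∞) {κ : Set N.Node}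
    (hdc : ∀ x y : N.Node, N.causLe x y → y ∈ κ → x ∈ κ)
    (hagree : ∀ t : N.T, Sum.inr t ∈ κ → τ t = τ' t) :
    ∀ x ∈ κ, N.date τ init x = N.date τ' init x := by
  have key : ∀ k : ℕ, ∀ x ∈ κ,
      (N.dateF τ init)^[k] ⊥ x = (N.dateF τ' init)^[k] ⊥ x := by
    intro k
    induction k with
    | zero => intro x _; rfl
    | succ k ih =>
      intro x hx
      rw [Function.iterate_succ_apply', Function.iterate_succ_apply']
      cases x with
      | inl p =>
        simp only [PetriNet.dateF]
        split
        · rfl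
        · refine iSup_congr fun t => iSup_congr fun ht => ?_
          refine ih _ (hdc _ _ (Relation.ReflTransGen.single ?_) hx)
          exact ht
      | inr t =>
        simp only [PetriNet.dateF]
        rw [hagree t hx]
        congr 1
        refine iSup_congr fun p => iSup_congr fun hp => ?_
        refine ih _ (hdc _ _ (Relation.ReflTransGen.single ?_) hx)
        exact hp
  intro x hx
  rw [PetriNet.date, PetriNet.date, iSup_apply, iSup_apply]
  exact iSup_congr fun k => key k x hx

/-- a transition with infinite latency has infinite date -/
lemma date_top (τ : N.T → ℝ≥0∞) (init : N.P → ℝ≥0∞) {t : N.T} (h : τ t = ⊤) :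
    N.date τ init (Sum.inr t) = ⊤ := by
  apply top_unique
  rw [PetriNet.date, iSup_apply]
  refine le_iSup_of_le 1 ?_
  rw [Function.iterate_one]
  simp [PetriNet.dateF, h]

/-- maximal configurations do not extend -/
lemma max_no_extends {κ : Set N.Node} (hκ : N.IsMaxConfiguration κ) (t : N.T) :
    ¬ N.Extends κ t := by
  rintro ⟨hnot, _, hconf⟩
  have := hκ.2 _ hconf (by intro x hx; exact Or.inl (Or.inl hx))
  exact hnot (this ▸ Or.inl (Or.inr rfl))

/-- the race policy executes a maximal configuration whose transitions all have
finite dates, when all other transitions have infinite dates -/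
lemma race_run [Fintype N.P] [Fintype N.T] (hN : N.IsOccurrenceNet)
    (τ : N.T → ℝ≥0∞) (init : N.P → ℝ≥0∞)
    {κdag : Set N.Node} (hκdag : N.IsMaxConfiguration κdag)
    (htop : ∀ t : N.T, Sum.inr t ∉ κdag → N.date τ init (Sum.inr t) = ⊤)
    (hfin : ∀ t : N.T, Sum.inr t ∈ κdag → N.date τ init (Sum.inr t) < ⊤) :
    N.Occurs τ init κdag := by
  classical
  have hwf : WellFounded N.causLt := by
    haveI : IsTrans N.Node N.causLt := ⟨fun _ _ _ => Relation.TransGen.trans⟩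
    haveI : IsIrrefl N.Node N.causLt := ⟨causLt_irrefl' hN⟩
    exact Finite.wellFounded_of_trans_of_irrefl _
  have main : ∀ n : ℕ, ∀ κ : Set N.Node, (κdag \ κ).ncard ≤ n →
      N.initConf ⊆ κ → κ ⊆ κdag → N.IsConfiguration κ →
      (∀ t : N.T, Sum.inr t ∈ κ → ∀ q ∈ N.post t, Sum.inl q ∈ κ) →
      Relation.ReflTransGen (N.RaceStep τ init) κ κdag := by
    intro n
    induction n with
    | zero =>
      intro κ hcard _ hsub _ _
      have : κdag \ κ = ∅ := by
        have := Set.ncard_eq_zero (Set.toFinite _) |>.mp (Nat.le_zero.mp hcard)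
        exact this
      have : κ = κdag := Set.Subset.antisymm hsub (by
        intro x hx; by_contra h; exact absurd this (Set.nonempty_iff_ne_empty.mp ⟨x, hx, h⟩))
      exact this ▸ Relation.ReflTransGen.refl
    | succ n ih =>
      intro κ hcard hinit hsub hconf hsat
      by_cases hκ : κ = κdag
      · exact hκ ▸ Relation.ReflTransGen.refl
      · have hne : (κdag \ κ).Nonempty := by
          rw [Set.diff_nonempty]
          intro h; exact hκ (Set.Subset.antisymm hsub h)
        obtain ⟨x, hxS, hxmin⟩ := hwf.has_min _ hne
        -- the minimal missing node is a transition
        obtain ⟨t, rfl⟩ : ∃ t : N.T, x = Sum.inr t := by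
          cases x with
          | inl p =>
            exfalso
            by_cases hp : N.Minimal p
            · exact hxS.2 (hinit ⟨p, hp, rfl⟩)
            · obtain ⟨t, ht⟩ := not_forall.mp hp
              have ht : p ∈ N.post t := not_not.mp ht
              have hlt : N.causLt (Sum.inr t) (Sum.inl p) :=
                Relation.TransGen.single ht
              have htκdag : Sum.inr t ∈ κdag :=
                hκdag.1.1 _ _ (Relation.ReflTransGen.single
                  (show N.prec (Sum.inr t) (Sum.inl p) from ht)) hxS.1
              by_cases htκ : Sum.inr t ∈ κ
              · exact hxS.2 (hsat t htκ p ht)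
              · exact hxmin _ ⟨htκdag, htκ⟩ hlt
          | inr t => exact ⟨t, rfl⟩
        -- t extends κ
        have hpreκ : ∀ p ∈ N.pre t, Sum.inl p ∈ κ := by
          intro p hp
          have hlt : N.causLt (Sum.inl p) (Sum.inr t) := Relation.TransGen.single hp
          have hpκdag : Sum.inl p ∈ κdag :=
            hκdag.1.1 _ _ (Relation.ReflTransGen.single
              (show N.prec (Sum.inl p) (Sum.inr t) from hp)) hxS.1
          by_contra h
          exact hxmin _ ⟨hpκdag, h⟩ hlt
        have hext : N.Extends κ t := by
          refine ⟨hxS.2, hpreκ, ?_, ?_⟩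
          · -- downward closed
            have hbelow : ∀ z : N.Node, N.causLe z (Sum.inr t) →
                z ∈ κ ∪ {Sum.inr t} ∪ Sum.inl '' N.post t := by
              intro z hz
              rcases causLe_inr z t hz with rfl | ⟨p, hp, hle⟩
              · exact Or.inl (Or.inr rfl)
              · exact Or.inl (Or.inl (hconf.1 _ _ hle (hpreκ p hp)))
            rintro z y hzy (hy | ⟨q, hq, rfl⟩)
            · rcases hy with hy | hy
              · exact Or.inl (Or.inl (hconf.1 _ _ hzy hy))
              · simp only [Set.mem_singleton_iff] at hy; subst hy
                exact hbelow z hzy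
            · rcases causLe_inl_post hN hq z hzy with rfl | hle
              · exact Or.inr ⟨q, hq, rfl⟩
              · exact hbelow z hle
          · -- conflict free (as a subset of κdag)
            have hsub' : κ ∪ {Sum.inr t} ∪ Sum.inl '' N.post t ⊆ κdag := by
              rintro z ((hz | hz) | ⟨q, hq, rfl⟩)
              · exact hsub hz
              · simp only [Set.mem_singleton_iff] at hz; subst hz; exact hxS.1
              · exact max_saturated hN hκdag hxS.1 hq
            intro a ha b hb
            exact hκdag.1.2 a (hsub' ha) b (hsub' hb)
        -- pick an extending transition inside κdag of minimal date
        obtain ⟨t₀, ht₀, hmind⟩ := Finset.exists_min_image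
          (Finset.univ.filter fun s => N.Extends κ s ∧ Sum.inr s ∈ κdag)
          (fun s => N.date τ init (Sum.inr s))
          ⟨t, by simp [hext, hxS.1]⟩
        simp only [Finset.mem_filter, Finset.mem_univ, true_and] at ht₀
        have hstep : N.RaceStep τ init κ
            (κ ∪ {Sum.inr t₀} ∪ Sum.inl '' N.post t₀) := by
          refine ⟨t₀, ht₀.1, ?_, rfl⟩
          intro t' hext'
          by_cases ht' : Sum.inr t' ∈ κdag
          · exact hmind t' (by simp [hext', ht'])
          · rw [htop t' ht']; exact le_top
        refine Relation.ReflTransGen.head hstep ?_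
        set κ' := κ ∪ {Sum.inr t₀} ∪ Sum.inl '' N.post t₀ with hκ'
        have hsub' : κ' ⊆ κdag := by
          rintro z ((hz | hz) | ⟨q, hq, rfl⟩)
          · exact hsub hz
          · simp only [Set.mem_singleton_iff] at hz; subst hz; exact ht₀.2
          · exact max_saturated hN hκdag ht₀.2 hq
        refine ih κ' ?_ (fun z hz => Or.inl (Or.inl (hinit hz))) hsub'
          ht₀.1.2.2 ?_
        · -- cardinality decreases
          have hlt : (κdag \ κ').ncard < (κdag \ κ).ncard := by
            apply Set.ncard_lt_ncard _ (Set.toFinite _)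
            constructor
            · intro z hz
              exact ⟨hz.1, fun h => hz.2 (Or.inl (Or.inl h))⟩
            · intro h
              have h1 : Sum.inr t₀ ∈ κdag \ κ := ⟨ht₀.2, ht₀.1.1⟩
              have h2 := h h1
              exact h2.2 (Or.inl (Or.inr rfl))
          omega
        · -- saturation of κ'
          rintro s ((hs | hs) | ⟨q, hq, hq'⟩) r hr
          · exact Or.inl (Or.inl (hsat s hs r hr))
          · simp only [Set.mem_singleton_iff] at hs
            have : s = t₀ := by injection hs
            subst this
            exact Or.inr ⟨r, hr, rfl⟩
          · exact absurd hq' (by simp)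
  refine ⟨main (κdag \ N.initConf).ncard N.initConf le_rfl le_rfl
    (initConf_subset_max hN hκdag) ?_ ?_, fun t => max_no_extends hκdag t⟩
  · constructor
    · rintro z y hzy ⟨p, hp, rfl⟩
      have := causLe_inl_min hp z hzy
      exact this ▸ ⟨p, hp, rfl⟩
    · rintro z ⟨p, hp, rfl⟩ y hy
      exact (no_conflict_min hp y).2
  · rintro s ⟨p, hp, hp'⟩ r hr
    exact absurd hp' (by simp)

end PetriNet

end AuxStmt8

/-- Theorem 1, statement 2: if the condition of statement 1 is violated
    and the allowed sets of latency/initial-date families are upward closed, then the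
    pre-OrchNet is not monotonic. -/
theorem stmt8 (N : PetriNet) [Fintype N.P] [Fintype N.T] (hN : N.IsOccurrenceNet)
    {Ω : Type}
    (𝕋 : Set (Ω → N.T → ℝ≥0∞)) (𝕀 : Set (Ω → N.P → ℝ≥0∞))
    (hupT : ∀ T ∈ 𝕋, ∀ T' : Ω → N.T → ℝ≥0∞, (∀ ω t, T ω t ≤ T' ω t) → T' ∈ 𝕋)
    (hupI : ∀ I ∈ 𝕀, ∀ I' : Ω → N.P → ℝ≥0∞, (∀ ω p, I ω p ≤ I' ω p) → I' ∈ 𝕀)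
    -- violation of condition (*): some maximal configuration beats the occurring one
    (T : Ω → N.T → ℝ≥0∞) (hT : T ∈ 𝕋) (I : Ω → N.P → ℝ≥0∞) (hI : I ∈ 𝕀) (ω : Ω)
    (κdag : Set N.Node) (hκdag : N.IsMaxConfiguration κdag)
    (κocc : Set N.Node) (hocc : N.Occurs (T ω) (I ω) κocc)
    (hviol : N.execTime (T ω) (I ω) κdag < N.execTime (T ω) (I ω) κocc) :
    -- non-monotony: some larger allowed instance has strictly smaller latency
    ∃ T' ∈ 𝕋, (∀ ω' t, T ω' t ≤ T' ω' t) ∧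
      ∃ κ' : Set N.Node, N.Occurs (T' ω) (I ω) κ' ∧
        N.execTime (T' ω) (I ω) κ' < N.execTime (T ω) (I ω) κocc := by
  classical
  set T' : Ω → N.T → ℝ≥0∞ := fun ω' t => if Sum.inr t ∈ κdag then T ω' t else ⊤ with hT'
  have hle : ∀ ω' t, T ω' t ≤ T' ω' t := by
    intro ω' t; by_cases h : Sum.inr t ∈ κdag <;> simp [hT', h]
  have hagree : ∀ t : N.T, Sum.inr t ∈ κdag → T ω t = T' ω t := by
    intro t ht; simp [hT', ht]
  have hdate := PetriNet.date_congr (T ω) (T' ω) (I ω) hκdag.1.1 hagree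
  have hexec : N.execTime (T' ω) (I ω) κdag = N.execTime (T ω) (I ω) κdag := by
    unfold PetriNet.execTime
    exact iSup_congr fun x => iSup_congr fun hx => (hdate x hx).symm
  have htop : ∀ t : N.T, Sum.inr t ∉ κdag → N.date (T' ω) (I ω) (Sum.inr t) = ⊤ := by
    intro t ht
    apply PetriNet.date_top
    simp [hT', ht]
  have hfin : ∀ t : N.T, Sum.inr t ∈ κdag → N.date (T' ω) (I ω) (Sum.inr t) < ⊤ := by
    intro t ht
    rw [← hdate _ ht]
    have h2 : N.date (T ω) (I ω) (Sum.inr t) ≤ N.execTime (T ω) (I ω) κdag :=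
      le_biSup _ ht
    exact lt_of_le_of_lt h2 (lt_of_lt_of_le hviol le_top)
  refine ⟨T', hupT T hT T' hle, hle, κdag, ?_, ?_⟩
  · exact PetriNet.race_run hN _ _ hκdag htop hfin
  · rw [hexec]; exact hviol
end

section
/- Conditional monotony (Theorem 4): if an OrchNet family satisfies Assumption A — distinct maximal configurations always return distinct value sets, i.e., for all ω and distinct maximal configurations κ, κ', V_ω(κ) ≠ V_ω(κ') — then the pre-OrchNet is conditionally monotonic: for N ≥ N' and any ω with V_ω(N) = V_ω(N'), the actually occurring configurations coincide, and E_ω(N) ≥ E_ω(N'). -/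
open scoped ENNReal Classical

open PetriNet

/-- The set of values returned by a configuration `κ`: the values `φ t` of its
    maximal transitions. -/
def PetriNet.retValues (N : PetriNet) {V : Type} (φ : N.T → V) (κ : Set N.Node) : Set V :=
  {v : V | ∃ t : N.T, Sum.inr t ∈ κ ∧
    (∀ t' : N.T, Sum.inr t' ∈ κ → ¬ N.causLt (Sum.inr t) (Sum.inr t')) ∧ v = φ t}

section AuxStmt16


namespace PetriNet

variable (N : PetriNet)

theorem aux_conflict_symm {x y : N.Node} (h : N.Conflict x y) : N.Conflict y x := by
  obtain ⟨t, t', hne, hx, hy, hint⟩ := h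
  exact ⟨t', t, hne.symm, hy, hx, by rwa [Set.inter_comm]⟩

theorem aux_le_inl {x : N.Node} {p : N.P} (h : N.causLe x (Sum.inl p)) :
    x = Sum.inl p ∨ ∃ t : N.T, p ∈ N.post t ∧ N.causLe x (Sum.inr t) := by
  rcases h.cases_tail with h | ⟨c, hc, hstep⟩
  · exact Or.inl h.symm
  · cases c with
    | inl q => exact absurd hstep (by exact id)
    | inr t => exact Or.inr ⟨t, hstep, hc⟩

theorem aux_le_inr {x : N.Node} {t : N.T} (h : N.causLe x (Sum.inr t)) :
    x = Sum.inr t ∨ ∃ p : N.P, p ∈ N.pre t ∧ N.causLe x (Sum.inl p) := by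
  rcases h.cases_tail with h | ⟨c, hc, hstep⟩
  · exact Or.inl h.symm
  · cases c with
    | inl q => exact Or.inr ⟨q, hstep, hc⟩
    | inr s => exact absurd hstep (by exact id)

theorem aux_min_below {x : N.Node} {p : N.P} (hp : N.Minimal p)
    (h : N.causLe x (Sum.inl p)) : x = Sum.inl p := by
  rcases N.aux_le_inl h with h | ⟨t, ht, _⟩
  · exact h
  · exact absurd ht (hp t)

theorem aux_producer (hN : N.IsOccurrenceNet) {x : N.Node} {p : N.P} {u : N.T}
    (hpu : p ∈ N.post u) (h : N.causLe x (Sum.inl p)) :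
    x = Sum.inl p ∨ N.causLe x (Sum.inr u) := by
  rcases N.aux_le_inl h with h | ⟨t, ht, hle⟩
  · exact Or.inl h
  · right
    have : t = u := hN.2.2.2.1 p ht hpu
    rwa [this] at hle

theorem aux_conflict_post (hN : N.IsOccurrenceNet) {x : N.Node} {p : N.P} {u : N.T}
    (hpu : p ∈ N.post u) (h : N.Conflict x (Sum.inl p)) : N.Conflict x (Sum.inr u) := by
  obtain ⟨t, t', hne, hx, hy, hint⟩ := h
  rcases N.aux_producer hN hpu hy with h | h
  · exact absurd h (by simp)
  · exact ⟨t, t', hne, hx, h, hint⟩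

theorem aux_initConf_config : N.IsConfiguration N.initConf := by
  constructor
  · rintro x y hxy ⟨p, hp, rfl⟩
    have := N.aux_min_below hp hxy
    exact ⟨p, hp, this.symm⟩
  · rintro x ⟨p, hp, rfl⟩ y hy ⟨t, t', _, hx, _, _⟩
    have := N.aux_min_below hp hx
    simp at this

/-- Invariants along the race policy runs. -/
theorem aux_invariant (τ : N.T → ℝ≥0∞) (init : N.P → ℝ≥0∞) {κ : Set N.Node}
    (h : Relation.ReflTransGen (N.RaceStep τ init) N.initConf κ) :
    N.IsConfiguration κ ∧ N.initConf ⊆ κ ∧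
      (∀ t : N.T, Sum.inr t ∈ κ → ∀ p ∈ N.post t, Sum.inl p ∈ κ) := by
  induction h with
  | refl =>
    refine ⟨N.aux_initConf_config, le_refl _, ?_⟩
    rintro t ⟨p, _, hp⟩ q _
    simp at hp
  | tail hbc hstep ih =>
    obtain ⟨ihconf, ihinit, ihpost⟩ := ih
    obtain ⟨t, hext, _, rfl⟩ := hstep
    refine ⟨hext.2.2, ?_, ?_⟩
    · exact ihinit.trans (by intro x hx; exact Or.inl (Or.inl hx))
    · rintro t' (ht' | ht') q hq
      · rcases ht' with ht' | ht'
        · exact Or.inl (Or.inl (ihpost t' ht' q hq))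
        · simp only [Set.mem_singleton_iff, Sum.inr.injEq] at ht'
          subst ht'
          exact Or.inr ⟨q, hq, rfl⟩
      · exfalso; rcases ht' with ⟨q', _, hq'⟩; simp at hq'

/-- An occurring configuration is maximal. -/
theorem aux_occurs_max (hN : N.IsOccurrenceNet) [Fintype N.P] [Fintype N.T]
    (τ : N.T → ℝ≥0∞) (init : N.P → ℝ≥0∞) {κ : Set N.Node}
    (h : N.Occurs τ init κ) : N.IsMaxConfiguration κ := by
  obtain ⟨hreach, hnoext⟩ := h
  obtain ⟨hconf, hinit, hpost⟩ := N.aux_invariant τ init hreach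
  refine ⟨hconf, ?_⟩
  intro κ'' hconf'' hsub
  by_contra hne
  -- get an element of κ'' \ κ
  have hns : ¬ κ'' ⊆ κ := fun h' => hne (Set.Subset.antisymm h' hsub)
  obtain ⟨x₁, hx₁, hx₁'⟩ := Set.not_subset.1 hns
  -- causLt is well-founded
  have hirr : IsIrrefl N.Node N.causLt := by
    constructor
    intro x hx
    obtain ⟨b, hb, hbx⟩ := Relation.TransGen.head'_iff.1 hx
    have hxb : N.causLe x b := Relation.ReflTransGen.single hb
    have : x = b := hN.2.1 x b hxb hbx
    subst this
    cases x with
    | inl p => exact hb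
    | inr t => exact hb
  have htr : IsTrans N.Node N.causLt := ⟨fun _ _ _ => Relation.TransGen.trans⟩
  have hwf : WellFounded N.causLt := Finite.wellFounded_of_trans_of_irrefl _
  obtain ⟨x₀, ⟨hx₀κ'', hx₀κ⟩, hmin⟩ :=
    hwf.has_min {x : N.Node | x ∈ κ'' ∧ x ∉ κ} ⟨x₁, hx₁, hx₁'⟩
  -- x₀ must be a transition
  obtain ⟨u, rfl⟩ : ∃ u : N.T, x₀ = Sum.inr u := by
    cases x₀ with
    | inl p =>
      exfalso
      by_cases hp : N.Minimal p
      · exact hx₀κ (hinit ⟨p, hp, rfl⟩)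
      · simp only [Minimal, not_forall, not_not] at hp
        obtain ⟨t, ht⟩ := hp
        have hlt : N.causLt (Sum.inr t) (Sum.inl p) := Relation.TransGen.single ht
        have htκ'' : Sum.inr t ∈ κ'' :=
          hconf''.1 _ _ (Relation.ReflTransGen.single (show N.prec (Sum.inr t) (Sum.inl p) from ht)) hx₀κ''
        have htκ : Sum.inr t ∉ κ := fun hh => hx₀κ (hpost t hh p ht)
        exact hmin _ ⟨htκ'', htκ⟩ hlt
    | inr u => exact ⟨u, rfl⟩
  -- preset of u is in κ
  have hpre : ∀ p ∈ N.pre u, Sum.inl p ∈ κ := by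
    intro p hp
    have hlt : N.causLt (Sum.inl p) (Sum.inr u) := Relation.TransGen.single hp
    have hκ'' : Sum.inl p ∈ κ'' :=
      hconf''.1 _ _ (Relation.ReflTransGen.single (show N.prec (Sum.inl p) (Sum.inr u) from hp)) hx₀κ''
    by_contra hpκ
    exact hmin _ ⟨hκ'', hpκ⟩ hlt
  -- u extends κ : contradiction
  apply hnoext u
  refine ⟨hx₀κ, hpre, ?_, ?_⟩
  · -- causal closure of the extended set
    have key : ∀ x, N.causLe x (Sum.inr u) →
        x ∈ κ ∪ {Sum.inr u} ∪ Sum.inl '' N.post u := by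
      intro x hx
      rcases N.aux_le_inr hx with rfl | ⟨p, hp, hle⟩
      · exact Or.inl (Or.inr rfl)
      · exact Or.inl (Or.inl (hconf.1 _ _ hle (hpre p hp)))
    rintro x y hxy (hy | hy)
    · rcases hy with hy | hy
      · exact Or.inl (Or.inl (hconf.1 _ _ hxy hy))
      · simp only [Set.mem_singleton_iff] at hy
        subst hy
        exact key x hxy
    · obtain ⟨p, hp, rfl⟩ := hy
      rcases N.aux_producer hN hp hxy with rfl | hle
      · exact Or.inr ⟨p, hp, rfl⟩
      · exact key x hle
  · -- conflict-freeness of the extended set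
    have claim : ∀ x y, x ∈ κ'' → y ∈ κ ∪ {Sum.inr u} ∪ Sum.inl '' N.post u →
        ¬ N.Conflict x y := by
      intro x y hx hy hc
      rcases hy with hy | hy
      · rcases hy with hy | hy
        · exact hconf''.2 x hx y (hsub hy) hc
        · simp only [Set.mem_singleton_iff] at hy
          subst hy
          exact hconf''.2 x hx _ hx₀κ'' hc
      · obtain ⟨p, hp, rfl⟩ := hy
        exact hconf''.2 x hx _ hx₀κ'' (N.aux_conflict_post hN hp hc)
    intro x hx y hy hc
    rcases hx with hx | hx
    · rcases hx with hx | hx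
      · exact claim x y (hsub hx) hy hc
      · simp only [Set.mem_singleton_iff] at hx
        subst hx
        exact claim _ y hx₀κ'' hy hc
    · obtain ⟨p, hp, rfl⟩ := hx
      have hc' : N.Conflict y (Sum.inr u) := N.aux_conflict_post hN hp (N.aux_conflict_symm hc)
      rcases hy with hy | hy
      · rcases hy with hy | hy
        · exact claim y _ (hsub hy) (Or.inl (Or.inr rfl)) hc'
        · simp only [Set.mem_singleton_iff] at hy
          subst hy
          exact hconf''.2 _ hx₀κ'' _ hx₀κ'' hc'
      · obtain ⟨q, hq, rfl⟩ := hy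
        exact hN.1 _ (N.aux_conflict_post hN hq (N.aux_conflict_symm hc'))

theorem aux_date_mono (τ τ' : N.T → ℝ≥0∞) (init init' : N.P → ℝ≥0∞)
    (hτ : ∀ t, τ' t ≤ τ t) (hinit : ∀ p, init' p ≤ init p) (x : N.Node) :
    N.date τ' init' x ≤ N.date τ init x := by
  have hstep : ∀ (f g : N.Node → ℝ≥0∞), (∀ y, f y ≤ g y) →
      ∀ y, N.dateF τ' init' f y ≤ N.dateF τ init g y := by
    intro f g hfg y
    cases y with
    | inl p =>
      simp only [dateF]
      split_ifs with h
      · exact hinit p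
      · exact iSup₂_mono fun t _ => hfg _
    | inr t =>
      exact add_le_add (iSup₂_mono fun p _ => hfg _) (hτ t)
  have hiter : ∀ k (y : N.Node),
      (N.dateF τ' init')^[k] ⊥ y ≤ (N.dateF τ init)^[k] ⊥ y := by
    intro k
    induction k with
    | zero => intro y; exact le_refl _
    | succ n ih =>
      intro y
      rw [Function.iterate_succ_apply', Function.iterate_succ_apply']
      exact hstep _ _ ih y
  simp only [date, iSup_apply]
  exact iSup_mono fun k => hiter k x

end PetriNet

end AuxStmt16

/-- Theorem 4, conditional monotony: under Assumption A (distinct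
    maximal configurations return distinct value sets), if `N ≥ N'` (pointwise
    larger latencies and initial dates) and for daemon value `ω` the returned value
    sets coincide, then the actually occurring configurations coincide and
    `E_ω(N) ≥ E_ω(N')`. -/
theorem stmt16 (N : PetriNet) [Fintype N.P] [Fintype N.T] (hN : N.IsOccurrenceNet)
    {V : Type} (φ : N.T → V)   -- value functions (for a fixed daemon value ω)
    (hA : ∀ κ κ' : Set N.Node, N.IsMaxConfiguration κ → N.IsMaxConfiguration κ' →
      κ ≠ κ' → N.retValues φ κ ≠ N.retValues φ κ')
    (τ τ' : N.T → ℝ≥0∞) (init init' : N.P → ℝ≥0∞)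
    (hτ : ∀ t, τ' t ≤ τ t) (hinit : ∀ p, init' p ≤ init p)
    (κ κ' : Set N.Node)
    (hκ : N.Occurs τ init κ) (hκ' : N.Occurs τ' init' κ')
    (hval : N.retValues φ κ = N.retValues φ κ') :
    κ = κ' ∧ N.execTime τ' init' κ' ≤ N.execTime τ init κ := by
  have hmax : N.IsMaxConfiguration κ := N.aux_occurs_max hN τ init hκ
  have hmax' : N.IsMaxConfiguration κ' := N.aux_occurs_max hN τ' init' hκ'
  have heq : κ = κ' := by
    by_contra hne
    exact hA κ κ' hmax hmax' hne hval
  subst heq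
  exact ⟨rfl, iSup₂_mono fun x _ => N.aux_date_mono τ τ' init init' hτ hinit x⟩
end
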